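/- Let (φ_i)_{i≥1} be a sequence of upper-triangular matrices in SL(2,ℝ), φ_i = [[a_i, b_i],[0, a_i^{−1}]] with a_i ≠ 0. Then the set of periods {τ ∈ (0, ∞) : the sequence (f^{(k)}(τ))_{k≥1} is bounded} contains at most one point. -/

import Mathlib

/-- The matrix `h^t = [[1, t],[0, 1]] ∈ SL(2,ℝ)`. -/
def hMat (t : ℝ) : Matrix (Fin 2) (Fin 2) ℝ := !![1, t; 0, 1]

/-- The kicked evolution `f^{(k)}(τ) = φ_k h^τ φ_{k-1} h^τ ⋯ φ_1 h^τ`. -/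
def kickedEvol (φ : ℕ → Matrix (Fin 2) (Fin 2) ℝ) (τ : ℝ) :
    ℕ → Matrix (Fin 2) (Fin 2) ℝ
  | 0 => 1
  | k + 1 => φ (k + 1) * hMat τ * kickedEvol φ τ k

/-- A sequence of matrices is bounded if all its entries are uniformly bounded
(equivalently, it lies in a compact subset). -/
def MatSeqBounded (f : ℕ → Matrix (Fin 2) (Fin 2) ℝ) : Prop :=
  ∃ C : ℝ, ∀ k : ℕ, 1 ≤ k → ∀ i j : Fin 2, |f k i j| ≤ C

def Aprod (a : ℕ → ℝ) (k : ℕ) : ℝ := ∏ i ∈ Finset.range k, a (i + 1)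

noncomputable def Bseq (a b : ℕ → ℝ) (τ : ℝ) : ℕ → ℝ :=
  fun k => Nat.rec 0 (fun k Bk => a (k + 1) * Bk + (a (k + 1) * τ + b (k + 1)) * (Aprod a k)⁻¹) k

lemma Bseq_zero (a b : ℕ → ℝ) (τ : ℝ) : Bseq a b τ 0 = 0 := rfl

lemma Bseq_succ (a b : ℕ → ℝ) (τ : ℝ) (k : ℕ) :
    Bseq a b τ (k + 1)
      = a (k + 1) * Bseq a b τ k + (a (k + 1) * τ + b (k + 1)) * (Aprod a k)⁻¹ := rfl

lemma Aprod_ne (a : ℕ → ℝ) (ha : ∀ i : ℕ, 1 ≤ i → a i ≠ 0) (k : ℕ) : Aprod a k ≠ 0 := by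
  apply Finset.prod_ne_zero_iff.2
  intro i _
  exact ha (i + 1) (by omega)

lemma kicked_eq (a b : ℕ → ℝ) (ha : ∀ i : ℕ, 1 ≤ i → a i ≠ 0)
    (φ : ℕ → Matrix (Fin 2) (Fin 2) ℝ)
    (hφ : ∀ i : ℕ, 1 ≤ i → φ i = !![a i, b i; 0, (a i)⁻¹]) (τ : ℝ) (k : ℕ) :
    kickedEvol φ τ k = !![Aprod a k, Bseq a b τ k; 0, (Aprod a k)⁻¹] := by
  induction k with
  | zero =>
      simp [kickedEvol, Aprod, Bseq_zero, Matrix.one_fin_two]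
  | succ k ih =>
      rw [kickedEvol, hφ (k + 1) (by omega), ih, hMat]
      have hk : Aprod a (k + 1) = Aprod a k * a (k + 1) := Finset.prod_range_succ _ _
      ext i j
      fin_cases i <;> fin_cases j <;>
        simp [Matrix.mul_fin_two, Bseq_succ, hk, mul_inv_rev] <;> ring

lemma Bseq_diff (a b : ℕ → ℝ) (ha : ∀ i : ℕ, 1 ≤ i → a i ≠ 0) (τ₁ τ₂ : ℝ) (k : ℕ) :
    Bseq a b τ₂ k - Bseq a b τ₁ k
      = (τ₂ - τ₁) * Aprod a k * ∑ j ∈ Finset.range k, ((Aprod a j) ^ 2)⁻¹ := by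
  induction k with
  | zero => simp [Bseq_zero]
  | succ k ih =>
      have hAk : Aprod a k ≠ 0 := Aprod_ne a ha k
      have hk : Aprod a (k + 1) = Aprod a k * a (k + 1) := Finset.prod_range_succ _ _
      rw [Bseq_succ, Bseq_succ, Finset.sum_range_succ, hk]
      have key : Aprod a k * ((Aprod a k) ^ 2)⁻¹ = (Aprod a k)⁻¹ := by
        rw [sq, mul_inv, ← mul_assoc, mul_inv_cancel₀ hAk, one_mul]
      calc a (k + 1) * Bseq a b τ₂ k + (a (k + 1) * τ₂ + b (k + 1)) * (Aprod a k)⁻¹ -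
            (a (k + 1) * Bseq a b τ₁ k + (a (k + 1) * τ₁ + b (k + 1)) * (Aprod a k)⁻¹)
          = a (k + 1) * (Bseq a b τ₂ k - Bseq a b τ₁ k)
              + a (k + 1) * (τ₂ - τ₁) * (Aprod a k)⁻¹ := by ring
        _ = a (k + 1) * ((τ₂ - τ₁) * Aprod a k * ∑ j ∈ Finset.range k, ((Aprod a j) ^ 2)⁻¹)
              + a (k + 1) * (τ₂ - τ₁) * (Aprod a k * ((Aprod a k) ^ 2)⁻¹) := by rw [ih, key]
        _ = (τ₂ - τ₁) * (Aprod a k * a (k + 1)) *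
              ((∑ j ∈ Finset.range k, ((Aprod a j) ^ 2)⁻¹) + ((Aprod a k) ^ 2)⁻¹) := by ring

/-- for upper-triangular kicks `φ_i = [[a_i, b_i],[0, a_i⁻¹]]` the set of
periods `τ > 0` for which the kicked evolution is bounded contains at most one point. -/
theorem stmt_9 (a b : ℕ → ℝ) (ha : ∀ i : ℕ, 1 ≤ i → a i ≠ 0)
    (φ : ℕ → Matrix (Fin 2) (Fin 2) ℝ)
    (hφ : ∀ i : ℕ, 1 ≤ i → φ i = !![a i, b i; 0, (a i)⁻¹]) :
    {τ : ℝ | τ ∈ Set.Ioi (0 : ℝ) ∧ MatSeqBounded (kickedEvol φ τ)}.Subsingleton := by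
  -- key: no τ₁ < τ₂ both bounded
  have key : ∀ τ₁ τ₂ : ℝ, τ₁ < τ₂ → MatSeqBounded (kickedEvol φ τ₁) →
      MatSeqBounded (kickedEvol φ τ₂) → False := by
    intro τ₁ τ₂ hlt ⟨C₁, h₁⟩ ⟨C₂, h₂⟩
    set C : ℝ := max (max C₁ C₂) 1 with hC
    have hC1 : (1 : ℝ) ≤ C := le_max_right _ _
    have hCpos : 0 < C := lt_of_lt_of_le one_pos hC1
    have hA : ∀ k, 1 ≤ k → |Aprod a k| ≤ C := by
      intro k hk
      have := h₁ k hk 0 0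
      rw [kicked_eq a b ha φ hφ τ₁ k] at this
      simp at this
      calc |Aprod a k| ≤ C₁ := this
        _ ≤ C := le_trans (le_max_left _ _) (le_max_left _ _)
    have hAinv : ∀ k, 1 ≤ k → |(Aprod a k)⁻¹| ≤ C := by
      intro k hk
      have := h₁ k hk 1 1
      rw [kicked_eq a b ha φ hφ τ₁ k] at this
      simp at this
      calc |(Aprod a k)⁻¹| ≤ C₁ := by rwa [abs_inv]
        _ ≤ C := le_trans (le_max_left _ _) (le_max_left _ _)
    have hB : ∀ k, 1 ≤ k → |Bseq a b τ₂ k - Bseq a b τ₁ k| ≤ 2 * C := by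
      intro k hk
      have h1 := h₁ k hk 0 1
      have h2 := h₂ k hk 0 1
      rw [kicked_eq a b ha φ hφ τ₁ k] at h1
      rw [kicked_eq a b ha φ hφ τ₂ k] at h2
      simp at h1 h2
      have hb1 : |Bseq a b τ₁ k| ≤ C := le_trans h1 (le_trans (le_max_left _ _) (le_max_left _ _))
      have hb2 : |Bseq a b τ₂ k| ≤ C := le_trans h2 (le_trans (le_max_right _ _) (le_max_left _ _))
      calc |Bseq a b τ₂ k - Bseq a b τ₁ k| ≤ |Bseq a b τ₂ k| + |Bseq a b τ₁ k| := abs_sub _ _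
        _ ≤ 2 * C := by linarith
    -- sum lower bound
    have hS : ∀ k : ℕ, (k : ℝ) * (C ^ 2)⁻¹ ≤ ∑ j ∈ Finset.range k, ((Aprod a j) ^ 2)⁻¹ := by
      intro k
      have : ∀ j ∈ Finset.range k, (C ^ 2)⁻¹ ≤ ((Aprod a j) ^ 2)⁻¹ := by
        intro j _
        have hAj : Aprod a j ≠ 0 := Aprod_ne a ha j
        have habs : |Aprod a j| ≤ C := by
          rcases Nat.eq_zero_or_pos j with h0 | h0
          · subst h0; simpa [Aprod] using hC1
          · exact hA j h0
        have h2 : (Aprod a j) ^ 2 ≤ C ^ 2 := by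
          calc (Aprod a j) ^ 2 = |Aprod a j| ^ 2 := (sq_abs _).symm
            _ ≤ C ^ 2 := by nlinarith [abs_nonneg (Aprod a j)]
        have hpos : 0 < (Aprod a j) ^ 2 := by positivity
        exact inv_anti₀ hpos h2
      calc (k : ℝ) * (C ^ 2)⁻¹ = ∑ _j ∈ Finset.range k, (C ^ 2)⁻¹ := by
            simp [Finset.sum_const, mul_comm]
        _ ≤ _ := Finset.sum_le_sum this
    -- |A k| ≥ 1/C
    have hAlow : ∀ k, 1 ≤ k → C⁻¹ ≤ |Aprod a k| := by
      intro k hk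
      have hAk : Aprod a k ≠ 0 := Aprod_ne a ha k
      have h1 : |(Aprod a k)⁻¹| ≤ C := hAinv k hk
      have h2 : (0:ℝ) < |Aprod a k| := abs_pos.2 hAk
      rw [abs_inv] at h1
      exact (inv_le_comm₀ h2 hCpos).1 h1
    -- contradiction for large k
    have hd : (0:ℝ) < τ₂ - τ₁ := sub_pos.2 hlt
    obtain ⟨n, hn⟩ := exists_nat_gt (2 * C ^ 4 / (τ₂ - τ₁))
    set k := n + 1 with hkdef
    have hk1 : 1 ≤ k := by omega
    set S : ℝ := ∑ j ∈ Finset.range k, ((Aprod a j) ^ 2)⁻¹ with hSdef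
    have hSk : (k : ℝ) * (C ^ 2)⁻¹ ≤ S := hS k
    have hSnn : 0 ≤ S := le_trans (by positivity) hSk
    have heq : |Bseq a b τ₂ k - Bseq a b τ₁ k| = (τ₂ - τ₁) * |Aprod a k| * S := by
      rw [Bseq_diff a b ha τ₁ τ₂ k, abs_mul, abs_mul, abs_of_pos hd, abs_of_nonneg hSnn]
    have hlow : (τ₂ - τ₁) * C⁻¹ * ((k : ℝ) * (C ^ 2)⁻¹) ≤ (τ₂ - τ₁) * |Aprod a k| * S := by
      gcongr <;> first
        | positivity
        | exact hAlow k hk1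
        | exact hSk
    have hle : (τ₂ - τ₁) * C⁻¹ * ((k : ℝ) * (C ^ 2)⁻¹) ≤ 2 * C := by
      calc _ ≤ (τ₂ - τ₁) * |Aprod a k| * S := hlow
        _ = |Bseq a b τ₂ k - Bseq a b τ₁ k| := heq.symm
        _ ≤ 2 * C := hB k hk1
    have hCne : C ≠ 0 := ne_of_gt hCpos
    have h3 : (0:ℝ) < C ^ 3 := by positivity
    have hid : (τ₂ - τ₁) * C⁻¹ * ((k : ℝ) * (C ^ 2)⁻¹) * C ^ 3 = (τ₂ - τ₁) * (k : ℝ) := by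
      field_simp
    have hfin : (τ₂ - τ₁) * (k : ℝ) ≤ 2 * C ^ 4 := by
      have := mul_le_mul_of_nonneg_right hle h3.le
      rw [hid] at this
      nlinarith
    have hgt : 2 * C ^ 4 < (τ₂ - τ₁) * (n : ℝ) := by
      rw [div_lt_iff₀ hd] at hn
      nlinarith
    have hnk : (n : ℝ) ≤ (k : ℝ) := by exact_mod_cast Nat.le_succ n
    nlinarith
  intro x hx y hy
  rcases lt_trichotomy x y with h | h | h
  · exact absurd (key x y h hx.2 hy.2) not_false
  · exact h
  · exact absurd (key y x h hy.2 hx.2) not_false
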